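/- Let n ≥ 1, let L ∈ ℝ^{n×n} be symmetric positive semidefinite such that 2I − L is also positive semidefinite, and set Δ = L − I. Let Π ∈ ℝ^{n×n}, and let ε, M, B ≥ 0. Assume that for every y ∈ ℝⁿ: (i) ‖Δy − ΠΔΠy‖_L ≤ ε·M·‖y‖_L, and (ii) ‖ΠΔΠy‖_L ≤ B·‖y‖_L. Then for every integer k ≥ 0 and every x ∈ ℝⁿ, ‖Δᵏx − (ΠΔΠ)ᵏx‖_L ≤ ε·M·‖x‖_L·(∑_{j=0}^{k−1} Bʲ). -/

import Mathlib

open Matrix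

/-- The semi-norm induced by a positive semidefinite matrix `L`:
`‖x‖_L = √(xᵀ L x)`. -/
noncomputable def semiNormL {n : ℕ} (L : Matrix (Fin n) (Fin n) ℝ) (x : Fin n → ℝ) : ℝ :=
  Real.sqrt (x ⬝ᵥ (L *ᵥ x))

lemma sqrt_dot_eq_norm {n : ℕ} (v : Fin n → ℝ) :
    Real.sqrt (v ⬝ᵥ v) = ‖(WithLp.equiv 2 (Fin n → ℝ)).symm v‖ := by
  rw [EuclideanSpace.norm_eq]
  congr 1
  simp [dotProduct, sq]

lemma transpose_eq_of_herm {n : ℕ} {S : Matrix (Fin n) (Fin n) ℝ}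
    (h : S.IsHermitian) : Sᵀ = S := by
  rw [← Matrix.conjTranspose_eq_transpose_of_trivial]; exact h.eq

section SqrtPort
open scoped MatrixOrder

noncomputable def Matrix.PosSemidef.sqrt {n : ℕ} {L : Matrix (Fin n) (Fin n) ℝ}
    (_hL : L.PosSemidef) : Matrix (Fin n) (Fin n) ℝ := CFC.sqrt L

lemma Matrix.PosSemidef.sqrt_mul_self {n : ℕ} {L : Matrix (Fin n) (Fin n) ℝ}
    (hL : L.PosSemidef) : hL.sqrt * hL.sqrt = L :=
  CFC.sqrt_mul_sqrt_self L hL.nonneg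

lemma Matrix.PosSemidef.posSemidef_sqrt {n : ℕ} {L : Matrix (Fin n) (Fin n) ℝ}
    (hL : L.PosSemidef) : hL.sqrt.PosSemidef :=
  (CFC.sqrt_nonneg L).posSemidef

end SqrtPort

lemma semiNormL_eq_norm {n : ℕ} {L : Matrix (Fin n) (Fin n) ℝ} (hL : L.PosSemidef)
    (x : Fin n → ℝ) :
    semiNormL L x = ‖(WithLp.equiv 2 (Fin n → ℝ)).symm (hL.sqrt *ᵥ x)‖ := by
  rw [← sqrt_dot_eq_norm, semiNormL]
  congr 1
  conv_lhs => rw [← hL.sqrt_mul_self]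
  rw [← mulVec_mulVec, dotProduct_mulVec, ← vecMul_transpose,
    transpose_eq_of_herm hL.posSemidef_sqrt.isHermitian]

lemma semiNormL_nonneg {n : ℕ} (L : Matrix (Fin n) (Fin n) ℝ) (x : Fin n → ℝ) :
    0 ≤ semiNormL L x := Real.sqrt_nonneg _

lemma semiNormL_add_le {n : ℕ} {L : Matrix (Fin n) (Fin n) ℝ} (hL : L.PosSemidef)
    (x y : Fin n → ℝ) :
    semiNormL L (x + y) ≤ semiNormL L x + semiNormL L y := by
  rw [semiNormL_eq_norm hL, semiNormL_eq_norm hL, semiNormL_eq_norm hL, mulVec_add]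
  simp only [WithLp.equiv_symm_apply, WithLp.toLp_add]
  exact norm_add_le _ _

theorem stmt_1 {n : ℕ} (hn : 1 ≤ n)
    (L : Matrix (Fin n) (Fin n) ℝ)
    (hL : L.PosSemidef)
    (hL2 : ((2 : ℝ) • (1 : Matrix (Fin n) (Fin n) ℝ) - L).PosSemidef)
    (Δ : Matrix (Fin n) (Fin n) ℝ) (hΔ : Δ = L - 1)
    (P : Matrix (Fin n) (Fin n) ℝ)
    (ε M B : ℝ) (hε : 0 ≤ ε) (hM : 0 ≤ M) (hB : 0 ≤ B)
    (h1 : ∀ y : Fin n → ℝ,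
      semiNormL L (Δ *ᵥ y - (P * Δ * P) *ᵥ y) ≤ ε * M * semiNormL L y)
    (h2 : ∀ y : Fin n → ℝ,
      semiNormL L ((P * Δ * P) *ᵥ y) ≤ B * semiNormL L y) :
    ∀ k : ℕ, ∀ x : Fin n → ℝ,
      semiNormL L ((Δ ^ k) *ᵥ x - ((P * Δ * P) ^ k) *ᵥ x)
        ≤ ε * M * semiNormL L x * (∑ j ∈ Finset.range k, B ^ j) := by
  -- contraction: ‖Δy‖_L ≤ ‖y‖_L
  have hΔt : Δᵀ = Δ := by
    rw [hΔ, transpose_sub, transpose_one, transpose_eq_of_herm hL.isHermitian]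
  have hcontr : ∀ y : Fin n → ℝ, semiNormL L (Δ *ᵥ y) ≤ semiNormL L y := by
    intro y
    apply Real.sqrt_le_sqrt
    have hdiff : (L - Δᵀ * L * Δ).PosSemidef := by
      have hLh : Lᴴ = L := hL.isHermitian.eq
      have e1 : Lᴴ * ((2:ℝ) • (1 : Matrix (Fin n) (Fin n) ℝ) - L) * L
          = (2:ℝ) • (L * L) - L * L * L := by
        rw [hLh, Matrix.mul_sub, Matrix.mul_smul, mul_one, Matrix.sub_mul,
          Matrix.smul_mul]
      have e2 : L - Δᵀ * L * Δ = (2:ℝ) • (L * L) - L * L * L := by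
        rw [hΔt, hΔ]
        have : ((2:ℝ) • (L * L) : Matrix (Fin n) (Fin n) ℝ) = L * L + L * L := by
          rw [two_smul]
        rw [this]
        simp only [Matrix.sub_mul, Matrix.mul_sub, one_mul, mul_one]
        abel
      rw [e2, ← e1]
      exact hL2.conjTranspose_mul_mul_same L
    have hpos := hdiff.dotProduct_mulVec_nonneg y
    have key : y ⬝ᵥ ((Δᵀ * L * Δ) *ᵥ y) = (Δ *ᵥ y) ⬝ᵥ (L *ᵥ (Δ *ᵥ y)) := by
      rw [← mulVec_mulVec, ← mulVec_mulVec, dotProduct_mulVec, vecMul_transpose]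
    have h0 : 0 ≤ y ⬝ᵥ ((L - Δᵀ * L * Δ) *ᵥ y) := by simpa using hpos
    rw [sub_mulVec, dotProduct_sub, key] at h0
    linarith
  have hcontrk : ∀ (k : ℕ) (y : Fin n → ℝ),
      semiNormL L ((Δ ^ k) *ᵥ y) ≤ semiNormL L y := by
    intro k
    induction k with
    | zero => intro y; simp
    | succ k ih =>
      intro y
      rw [pow_succ', ← mulVec_mulVec]
      exact le_trans (hcontr _) (ih y)
  set Q := P * Δ * P with hQ
  intro k
  induction k with
  | zero => intro x; simp [semiNormL]
  | succ k ih =>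
    intro x
    have split : (Δ ^ (k+1)) *ᵥ x - (Q ^ (k+1)) *ᵥ x
        = (Δ *ᵥ ((Δ ^ k) *ᵥ x) - Q *ᵥ ((Δ ^ k) *ᵥ x))
          + Q *ᵥ ((Δ ^ k) *ᵥ x - (Q ^ k) *ᵥ x) := by
      rw [pow_succ', pow_succ', ← mulVec_mulVec, ← mulVec_mulVec, mulVec_sub]
      abel
    rw [split]
    calc semiNormL L _ ≤ semiNormL L (Δ *ᵥ ((Δ ^ k) *ᵥ x) - Q *ᵥ ((Δ ^ k) *ᵥ x))
          + semiNormL L (Q *ᵥ ((Δ ^ k) *ᵥ x - (Q ^ k) *ᵥ x)) :=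
        semiNormL_add_le hL _ _
      _ ≤ ε * M * semiNormL L ((Δ ^ k) *ᵥ x)
          + B * semiNormL L ((Δ ^ k) *ᵥ x - (Q ^ k) *ᵥ x) :=
        add_le_add (h1 _) (h2 _)
      _ ≤ ε * M * semiNormL L x
          + B * (ε * M * semiNormL L x * (∑ j ∈ Finset.range k, B ^ j)) :=
        add_le_add
          (mul_le_mul_of_nonneg_left (hcontrk k x) (mul_nonneg hε hM))
          (mul_le_mul_of_nonneg_left (ih x) hB)
      _ = ε * M * semiNormL L x * (∑ j ∈ Finset.range (k+1), B ^ j) := by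
        rw [geom_sum_succ]
        ring
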